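/- Let u ≥ 1 and N ≥ 1 be natural numbers and let q = ⌊N/u⌋ (natural-number division). Then the value (N − q·u)·negMulLog((q+1)/N) + ((q+1)·u − N)·negMulLog(q/N) is the greatest element of the set { H(F) : F : Fin u → ℕ, ∑ i, F i = N }; that is, it is attained by some such F and is an upper bound for H(G) over all G : Fin u → ℕ with ∑ i, G i = N. (Combination of Theorem 1 and Equation (5): the formula H_max gives the maximum achievable entropy of a frequency vector with total N over u segment types.) -/

import Mathlib

open Real Finset

lemma chord_bound {φ : ℝ → ℝ} (hφ : ConcaveOn ℝ (Set.Ici 0) φ)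
    {a b x : ℝ} (hx : 0 ≤ x) (ha : 0 ≤ a) (hab : a < b)
    (h : x ≤ a ∨ b ≤ x) :
    (b - a) * φ x ≤ (b - x) * φ a + (x - a) * φ b := by
  rcases h with h | h
  · have hbx : 0 < b - x := by linarith
    have key := hφ.2 (Set.mem_Ici.2 hx) (Set.mem_Ici.2 (le_trans ha hab.le))
      (show (0:ℝ) ≤ (b-a)/(b-x) from div_nonneg (by linarith) (by linarith))
      (show (0:ℝ) ≤ (a-x)/(b-x) from div_nonneg (by linarith) (by linarith))
      (show (b-a)/(b-x) + (a-x)/(b-x) = 1 by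
        rw [← add_div, div_eq_one_iff_eq hbx.ne']; ring)
    have harg : ((b-a)/(b-x)) • x + ((a-x)/(b-x)) • b = a := by
      simp only [smul_eq_mul]; field_simp; ring
    rw [harg] at key
    simp only [smul_eq_mul] at key
    have hmul := mul_le_mul_of_nonneg_left key hbx.le
    have h1 : (b-x) * ((b-a)/(b-x) * φ x + (a-x)/(b-x) * φ b)
        = (b-a) * φ x + (a-x) * φ b := by field_simp; try ring
    rw [h1] at hmul
    linarith
  · rcases eq_or_lt_of_le h with rfl | h
    · nlinarith
    have hxa : 0 < x - a := by linarith
    have key := hφ.2 (Set.mem_Ici.2 ha) (Set.mem_Ici.2 hx)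
      (show (0:ℝ) ≤ (x-b)/(x-a) from div_nonneg (by linarith) (by linarith))
      (show (0:ℝ) ≤ (b-a)/(x-a) from div_nonneg (by linarith) (by linarith))
      (show (x-b)/(x-a) + (b-a)/(x-a) = 1 by
        rw [← add_div, div_eq_one_iff_eq hxa.ne']; ring)
    have harg : ((x-b)/(x-a)) • a + ((b-a)/(x-a)) • x = b := by
      simp only [smul_eq_mul]; field_simp; ring
    rw [harg] at key
    simp only [smul_eq_mul] at key
    have hmul := mul_le_mul_of_nonneg_left key hxa.le
    have h1 : (x-a) * ((x-b)/(x-a) * φ a + (b-a)/(x-a) * φ x)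
        = (x-b) * φ a + (b-a) * φ x := by field_simp; try ring
    rw [h1] at hmul
    linarith

theorem entropy_isGreatest (u N : ℕ) (hu : 1 ≤ u) (hN : 1 ≤ N) :
    IsGreatest
      {h : ℝ | ∃ F : Fin u → ℕ, (∑ i, F i = N) ∧
        h = ∑ i, Real.negMulLog ((F i : ℝ) / N)}
      (((N : ℝ) - (N / u : ℕ) * u) * Real.negMulLog (((N / u : ℕ) + 1 : ℝ) / N)
        + (((N / u : ℕ) + 1 : ℝ) * u - N) * Real.negMulLog (((N / u : ℕ) : ℝ) / N)) := by
  set q : ℕ := N / u with hq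
  set r : ℕ := N % u with hr
  have hru : r < u := Nat.mod_lt _ hu
  have hdm : u * q + r = N := Nat.div_add_mod N u
  have hN0 : (0:ℝ) < N := by exact_mod_cast hN
  clear_value q r
  set A : ℝ := Real.negMulLog ((q : ℝ) / N) with hA
  set B : ℝ := Real.negMulLog (((q : ℕ) + 1 : ℝ) / N) with hB
  have hc1 : ((N : ℝ) - q * u) = r := by push_cast [← hdm]; ring
  have hc2 : (((q:ℝ) + 1) * u - N) = (u - r : ℝ) := by push_cast [← hdm]; ring
  constructor
  · -- membership
    refine ⟨fun i => if (i : ℕ) < r then q + 1 else q, ?_, ?_⟩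
    · show ∑ i : Fin u, (fun m : ℕ => if m < r then q + 1 else q) (i : ℕ) = N
      rw [Fin.sum_univ_eq_sum_range (fun m : ℕ => if m < r then q + 1 else q) u]
      have h1 : ∀ i, (if i < r then q + 1 else q) = q + (if i < r then 1 else 0) := by
        intro i; split <;> omega
      simp only [h1, Finset.sum_add_distrib, Finset.sum_const, Finset.card_range,
        smul_eq_mul, mul_one, Finset.sum_boole]
      have hfil : (Finset.range u).filter (fun i => i < r) = Finset.range r := by
        ext i; simp only [Finset.mem_filter, Finset.mem_range]; omega
      rw [hfil]; simp only [Finset.card_range, Nat.cast_id]; omega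
    · symm
      show ∑ i : Fin u,
          (fun m : ℕ => Real.negMulLog ((m : ℝ) / N)) ((if (i : ℕ) < r then q + 1 else q)) = _
      rw [Fin.sum_univ_eq_sum_range
        (fun m : ℕ => Real.negMulLog (((if m < r then q + 1 else q : ℕ) : ℝ) / N)) u]
      have h1 : ∀ i, Real.negMulLog (((if i < r then q + 1 else q : ℕ) : ℝ) / N)
          = if i < r then B else A := by
        intro i; split
        · rw [hB]; push_cast; try ring_nf
        · rw [hA]
      simp only [h1]
      rw [Finset.sum_ite, Finset.sum_const, Finset.sum_const]
      have hfil : (Finset.range u).filter (fun i => i < r) = Finset.range r := by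
        ext i; simp only [Finset.mem_filter, Finset.mem_range]; omega
      have hfil2 : (Finset.range u).filter (fun i => ¬ i < r)
          = Finset.range u \ Finset.range r := by
        ext i; simp only [Finset.mem_filter, Finset.mem_range, Finset.mem_sdiff]; try omega
      rw [hfil, hfil2, Finset.card_sdiff_of_subset (by
          intro i; simp only [Finset.mem_range]; omega),
        Finset.card_range, Finset.card_range]
      rw [hc1, hc2]
      have hcr : ((u - r : ℕ) : ℝ) = (u : ℝ) - r := by
        rw [Nat.cast_sub hru.le]
      rw [nsmul_eq_mul, nsmul_eq_mul, hcr]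
  · -- upper bound
    rintro h ⟨G, hG, rfl⟩
    have hGsum : ∑ i, (G i : ℝ) = N := by exact_mod_cast hG
    have hab : (q : ℝ) / N < ((q : ℝ) + 1) / N :=
      (div_lt_div_iff_of_pos_right hN0).mpr (by linarith)
    have key : ∀ m : ℕ, Real.negMulLog ((m : ℝ) / N)
        ≤ ((q : ℝ) + 1 - m) * A + ((m : ℝ) - q) * B := by
      intro m
      have hx : (0:ℝ) ≤ (m:ℝ)/N := by positivity
      have ha : (0:ℝ) ≤ (q:ℝ)/N := by positivity
      have hside : (m:ℝ)/N ≤ (q:ℝ)/N ∨ ((q:ℝ)+1)/N ≤ (m:ℝ)/N := by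
        rcases le_or_gt m q with hle | hlt
        · exact Or.inl ((div_le_div_iff_of_pos_right hN0).mpr (by exact_mod_cast hle))
        · exact Or.inr ((div_le_div_iff_of_pos_right hN0).mpr (by exact_mod_cast hlt))
      have hc := chord_bound Real.concaveOn_negMulLog hx ha hab hside
      rw [← hA, ← hB] at hc
      have e1 : ((q:ℝ)+1)/N - (q:ℝ)/N = 1/N := by ring
      have e2 : ((q:ℝ)+1)/N - (m:ℝ)/N = ((q:ℝ)+1-m)/N := by ring
      have e3 : (m:ℝ)/N - (q:ℝ)/N = ((m:ℝ)-q)/N := by ring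
      rw [e1, e2, e3, one_div, inv_mul_eq_div, div_mul_eq_mul_div, div_mul_eq_mul_div,
        ← add_div, div_le_div_iff₀ hN0 hN0] at hc
      exact le_of_mul_le_mul_right hc hN0
    calc ∑ i, Real.negMulLog ((G i : ℝ) / N)
        ≤ ∑ i, (((q : ℝ) + 1 - G i) * A + ((G i : ℝ) - q) * B) :=
          Finset.sum_le_sum fun i _ => key (G i)
      _ = ((N : ℝ) - q * u) * B + (((q:ℝ) + 1) * u - N) * A := by
          simp_rw [sub_mul, add_mul, Finset.sum_add_distrib, Finset.sum_sub_distrib,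
            Finset.sum_const, Finset.card_univ, Fintype.card_fin, ← Finset.sum_mul, hGsum]
          ring
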